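/- arXiv:1009.3985 — 2 statements merged into one kernel-verified Lean document; each statement's English description precedes it below -/
import Mathlib

section
/- Let n be an even natural number. Then n belongs to B if and only if n/2 is a perfect square. -/
open PowerSeries

/-- `g = ∑_{n ≥ 0} x^{n²}` in `(ℤ/2ℤ)[[x]]`: the coefficient of `x^m` is `1`
exactly when `m` is a perfect square. -/
noncomputable def g : PowerSeries (ZMod 2) :=
  PowerSeries.mk fun m => if IsSquare m then 1 else 0

/-- `B` is the set of `n` for which the coefficient of `x^n` in `1/g` equals `1`. -/
noncomputable def B : Set ℕ := {n | PowerSeries.coeff (R := ZMod 2) n g⁻¹ = 1}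

open Finset

private lemma zmod2_add_self (a : ZMod 2) : a + a = 0 := by revert a; decide
private lemma zmod2_mul_self (a : ZMod 2) : a * a = a := by revert a; decide

private lemma ps_two : (2 : PowerSeries (ZMod 2)) = 0 := by
  have : (2 : PowerSeries (ZMod 2)) = 1 + 1 := by norm_num
  rw [this]
  ext n
  simp only [map_add, map_zero, zmod2_add_self]

/-- Frobenius on coefficients in characteristic 2. -/
private lemma coeff_sq (f : PowerSeries (ZMod 2)) (n : ℕ) :
    coeff (R := ZMod 2) n (f * f) = if Even n then coeff (R := ZMod 2) (n / 2) f else 0 := by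
  rw [coeff_mul]
  rw [← Finset.sum_filter_add_sum_filter_not (antidiagonal n) (fun p => p.1 = p.2)]
  have h2 : ∑ p ∈ (antidiagonal n).filter (fun p => ¬ p.1 = p.2),
      coeff (R := ZMod 2) p.1 f * coeff (R := ZMod 2) p.2 f = 0 := by
    refine Finset.sum_involution (fun p _ => (p.2, p.1)) ?_ ?_ ?_ ?_
    · intro p _
      rw [mul_comm]
      exact zmod2_add_self _
    · intro p hp _ hq
      simp only [mem_filter, HasAntidiagonal.mem_antidiagonal] at hp
      exact hp.2 (congrArg Prod.snd hq)
    · intro p hp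
      simp only [mem_filter, HasAntidiagonal.mem_antidiagonal] at hp ⊢
      omega
    · intro p _; rfl
  rw [h2, add_zero]
  by_cases hn : Even n
  · have he : (antidiagonal n).filter (fun p => p.1 = p.2) = {(n/2, n/2)} := by
      ext p
      simp only [mem_filter, HasAntidiagonal.mem_antidiagonal, mem_singleton, Prod.ext_iff]
      obtain ⟨k, hk⟩ := hn
      omega
    rw [he, sum_singleton, if_pos hn]
    exact zmod2_mul_self _
  · have he : (antidiagonal n).filter (fun p => p.1 = p.2) = ∅ := by
      ext p
      simp only [mem_filter, HasAntidiagonal.mem_antidiagonal, notMem_empty, iff_false, not_and]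
      intro h1 h2
      exact hn ⟨p.1, by omega⟩
    rw [he, sum_empty, if_neg hn]

/-- even part of g (even squares). -/
noncomputable def Ag : PowerSeries (ZMod 2) :=
  PowerSeries.mk fun m => if Even m ∧ IsSquare m then 1 else 0

/-- odd part of g (odd squares). -/
noncomputable def Rg : PowerSeries (ZMod 2) :=
  PowerSeries.mk fun m => if ¬ Even m ∧ IsSquare m then 1 else 0

/-- even part of g⁻¹. -/
noncomputable def Ee : PowerSeries (ZMod 2) :=
  PowerSeries.mk fun m => if Even m then coeff (R := ZMod 2) m g⁻¹ else 0

/-- odd part of g⁻¹. -/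
noncomputable def Oo : PowerSeries (ZMod 2) :=
  PowerSeries.mk fun m => if ¬ Even m then coeff (R := ZMod 2) m g⁻¹ else 0

private lemma g_const : constantCoeff (R := ZMod 2) g ≠ 0 := by
  have : constantCoeff (R := ZMod 2) g = 1 := by
    rw [← coeff_zero_eq_constantCoeff_apply]
    simp [g, coeff_mk, (show IsSquare (0:ℕ) from ⟨0, rfl⟩)]
  rw [this]; exact one_ne_zero

private lemma g_inv_mul : g * g⁻¹ = 1 := PowerSeries.mul_inv_cancel g g_const

private lemma g_decomp : g = Ag + Rg := by
  ext n
  simp only [g, Ag, Rg, coeff_mk, map_add]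
  by_cases h1 : Even n <;> by_cases h2 : IsSquare n <;> simp [h1, h2]

private lemma ginv_decomp : g⁻¹ = Ee + Oo := by
  ext n
  simp only [Ee, Oo, coeff_mk, map_add]
  by_cases h1 : Even n <;> simp [h1]

/-- support parity predicates -/
private def ES (f : PowerSeries (ZMod 2)) : Prop := ∀ m, ¬ Even m → coeff (R := ZMod 2) m f = 0
private def OS (f : PowerSeries (ZMod 2)) : Prop := ∀ m, Even m → coeff (R := ZMod 2) m f = 0

private lemma es_Ag : ES Ag := fun m hm => by simp [Ag, coeff_mk, hm]
private lemma os_Rg : OS Rg := fun m hm => by simp [Rg, coeff_mk, hm]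
private lemma es_Ee : ES Ee := fun m hm => by simp [Ee, coeff_mk, hm]
private lemma os_Oo : OS Oo := fun m hm => by simp [Oo, coeff_mk, hm]

private lemma mul_ee {f h : PowerSeries (ZMod 2)} (hf : ES f) (hh : ES h) : ES (f * h) := by
  intro m hm
  rw [coeff_mul]
  apply Finset.sum_eq_zero
  intro p hp
  rw [HasAntidiagonal.mem_antidiagonal] at hp
  rcases Nat.even_or_odd p.1 with h1 | h1
  · have : ¬ Even p.2 := by
      obtain ⟨a, ha⟩ := h1; intro ⟨b, hb⟩; exact hm ⟨a + b, by omega⟩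
    rw [hh _ this, mul_zero]
  · rw [hf _ (Nat.not_even_iff_odd.mpr h1), zero_mul]

private lemma mul_oo {f h : PowerSeries (ZMod 2)} (hf : OS f) (hh : OS h) : ES (f * h) := by
  intro m hm
  rw [coeff_mul]
  apply Finset.sum_eq_zero
  intro p hp
  rw [HasAntidiagonal.mem_antidiagonal] at hp
  rcases Nat.even_or_odd p.1 with h1 | h1
  · rw [hf _ h1, zero_mul]
  · have : Even p.2 := by
      obtain ⟨a, ha⟩ := h1; rcases Nat.even_or_odd p.2 with h2 | h2
      · exact h2
      · obtain ⟨b, hb⟩ := h2; exact absurd ⟨a + b + 1, by omega⟩ hm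
    rw [hh _ this, mul_zero]

private lemma mul_eo {f h : PowerSeries (ZMod 2)} (hf : ES f) (hh : OS h) : OS (f * h) := by
  intro m hm
  rw [coeff_mul]
  apply Finset.sum_eq_zero
  intro p hp
  rw [HasAntidiagonal.mem_antidiagonal] at hp
  rcases Nat.even_or_odd p.1 with h1 | h1
  · have : Even p.2 := by
      obtain ⟨a, ha⟩ := h1; obtain ⟨c, hc⟩ := hm
      exact ⟨c - a, by omega⟩
    rw [hh _ this, mul_zero]
  · rw [hf _ (Nat.not_even_iff_odd.mpr h1), zero_mul]

private lemma expand_one (n : ℕ) :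
    coeff (R := ZMod 2) n 1 = coeff (R := ZMod 2) n (Ag * Ee) + coeff (R := ZMod 2) n (Rg * Oo)
      + (coeff (R := ZMod 2) n (Ag * Oo) + coeff (R := ZMod 2) n (Rg * Ee)) := by
  have h1 : (Ag + Rg) * (Ee + Oo) = 1 := by rw [← g_decomp, ← ginv_decomp]; exact g_inv_mul
  have h2 : (1 : PowerSeries (ZMod 2)) = Ag * Ee + Rg * Oo + (Ag * Oo + Rg * Ee) := by
    rw [← h1]; ring
  rw [h2]
  simp only [map_add]

private lemma os_RE : OS (Rg * Ee) := by rw [mul_comm]; exact mul_eo es_Ee os_Rg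

private lemma eq1 : Ag * Ee + Rg * Oo = 1 := by
  ext n
  rw [map_add]
  by_cases hn : Even n
  · rw [expand_one n, mul_eo es_Ag os_Oo n hn, os_RE n hn]
    ring
  · rw [mul_ee es_Ag es_Ee n hn, mul_oo os_Rg os_Oo n hn, coeff_one,
      if_neg (by rintro rfl; exact hn ⟨0, rfl⟩)]
    ring

private lemma eq2 : Ag * Oo + Rg * Ee = 0 := by
  ext n
  rw [map_add, map_zero]
  by_cases hn : Even n
  · rw [mul_eo es_Ag os_Oo n hn, os_RE n hn]; ring
  · have := expand_one n
    rw [mul_ee es_Ag es_Ee n hn, mul_oo os_Rg os_Oo n hn] at this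
    have h1 : coeff (R := ZMod 2) n (1 : PowerSeries (ZMod 2)) = 0 := by
      rw [coeff_one, if_neg]; rintro rfl; exact hn ⟨0, rfl⟩
    rw [h1] at this
    linear_combination -this

private lemma Ag_eq : Ag = (g * g) * (g * g) := by
  ext n
  rw [coeff_sq (g * g) n]
  by_cases hn : Even n
  · rw [if_pos hn, coeff_sq g (n / 2)]
    by_cases hn2 : Even (n / 2)
    · rw [if_pos hn2]
      simp only [Ag, coeff_mk, g]
      have h4 : n = 4 * (n / 2 / 2) := by
        obtain ⟨a, ha⟩ := hn; obtain ⟨b, hb⟩ := hn2; omega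
      have hiff : (Even n ∧ IsSquare n) ↔ IsSquare (n / 2 / 2) := by
        constructor
        · rintro ⟨-, r, hr⟩
          have hre : Even r := by
            have h' := hn
            rw [hr, Nat.even_mul] at h'
            tauto
          obtain ⟨s, hs⟩ := hre
          have hn4 : n = 4 * (s * s) := by rw [hr, hs]; ring
          exact ⟨s, by omega⟩
        · rintro ⟨s, hs⟩
          refine ⟨hn, 2 * s, ?_⟩
          have : 2 * s * (2 * s) = 4 * (s * s) := by ring
          omega
      by_cases h : IsSquare (n / 2 / 2)
      · rw [if_pos h, if_pos (hiff.mpr h)]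
      · rw [if_neg h, if_neg (fun hc => h (hiff.mp hc))]
    · rw [if_neg hn2]
      simp only [Ag, coeff_mk]
      rw [if_neg]
      rintro ⟨-, r, hr⟩
      have hre : Even r := by
        have h' := hn
        rw [hr, Nat.even_mul] at h'
        tauto
      obtain ⟨s, hs⟩ := hre
      have hn4 : n = 4 * (s * s) := by rw [hr, hs]; ring
      exact hn2 ⟨s * s, by omega⟩
  · rw [if_neg hn]
    simp only [Ag, coeff_mk]
    rw [if_neg (fun hc => hn hc.1)]

private lemma Ee_key : Ee = Ag * (g⁻¹ * g⁻¹) := by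
  rw [ginv_decomp]
  linear_combination (-Ee) * eq1 + (-Oo) * eq2 + (Rg * Ee * Oo - Ag * Ee * Oo) * ps_two

private lemma Ee_eq : Ee = g * g := by
  rw [Ee_key, Ag_eq]
  linear_combination (g * g * (g * g⁻¹ + 1)) * g_inv_mul

theorem stmt0 (n : ℕ) (hn : Even n) :
    n ∈ B ↔ IsSquare (n / 2) := by
  have h1 : coeff (R := ZMod 2) n g⁻¹ = coeff (R := ZMod 2) n Ee := by
    simp [Ee, coeff_mk, hn]
  have h2 : coeff (R := ZMod 2) n Ee = if IsSquare (n / 2) then 1 else 0 := by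
    rw [Ee_eq, coeff_sq, if_pos hn]
    simp [g, coeff_mk]
  constructor
  · intro hB
    have : coeff (R := ZMod 2) n g⁻¹ = 1 := hB
    rw [h1, h2] at this
    by_contra hc
    rw [if_neg hc] at this
    exact zero_ne_one this
  · intro hsq
    show coeff (R := ZMod 2) n g⁻¹ = 1
    rw [h1, h2, if_pos hsq]
end

section
/- Let n be a natural number with n ≡ 7 (mod 16). Then n belongs to B if and only if the number of triples (a,b,c) of nonnegative integers with n = a² + 2b² + 4c² is odd. -/
open PowerSeries

namespace Stmt12Aux

open Finset

noncomputable abbrev R : Type := PowerSeries (ZMod 2)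

open Classical in
/-- theta series of triangular numbers: `2c²+c`, `c ∈ ℤ`, is a bijective
parametrization of triangular numbers. -/
noncomputable def T : R := PowerSeries.mk fun m => if ∃ c : ℤ, (m : ℤ) = 2*c^2 + c then 1 else 0

open Classical in
noncomputable def U : R := PowerSeries.mk fun m => if ∃ c : ℤ, (m : ℤ) = 4*c^2 + c then 1 else 0

open Classical in
noncomputable def V : R := PowerSeries.mk fun m => if ∃ c : ℤ, (m : ℤ) = 4*c^2 + 3*c then 1 else 0

lemma htwo : (2 : R) = 0 := by
  have h : (2:R) = PowerSeries.C (R := ZMod 2) 2 :=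
    (map_ofNat (PowerSeries.C (R := ZMod 2)) 2).symm
  rw [h, show (2:ZMod 2) = 0 from by decide, map_zero]

instance : CharP R 2 := CharTwo.of_one_ne_zero_of_two_eq_zero one_ne_zero htwo

lemma zmod2_mul_self (x : ZMod 2) : x * x = x := by revert x; decide

/-- coefficient of a square in char 2 -/
lemma coeff_sq (A : R) (m : ℕ) :
    PowerSeries.coeff (R := ZMod 2) m (A^2) =
      if 2 ∣ m then PowerSeries.coeff (R := ZMod 2) (m/2) A else 0 := by
  rw [pow_two, PowerSeries.coeff_mul]
  by_cases hm : 2 ∣ m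
  · obtain ⟨n, rfl⟩ := hm
    simp only [if_pos (dvd_mul_right 2 n), Nat.mul_div_cancel_left _ (by norm_num : 0 < 2)]
    have hmem : ((n,n) : ℕ × ℕ) ∈ Finset.HasAntidiagonal.antidiagonal (2*n) := by
      rw [Finset.HasAntidiagonal.mem_antidiagonal]; ring
    rw [← Finset.add_sum_erase _ _ hmem, zmod2_mul_self]
    have hzero : ∑ p ∈ (Finset.HasAntidiagonal.antidiagonal (2*n)).erase (n,n),
        PowerSeries.coeff (R := ZMod 2) p.1 A * PowerSeries.coeff (R := ZMod 2) p.2 A = 0 := by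
      apply Finset.sum_involution (fun p _ => (p.2, p.1))
      · intro p _
        rw [mul_comm]
        exact CharTwo.add_self_eq_zero _
      · intro p hp _
        rw [Finset.mem_erase, Finset.HasAntidiagonal.mem_antidiagonal] at hp
        intro hcontra
        have h1 : p.2 = p.1 := congrArg Prod.fst hcontra
        apply hp.1
        have : p.1 = n := by omega
        have h2 : p.2 = n := by omega
        exact Prod.ext this h2
      · intro p hp
        rw [Finset.mem_erase, Finset.HasAntidiagonal.mem_antidiagonal] at hp ⊢
        constructor
        · intro hcontra
          apply hp.1
          have h1 : p.2 = n := congrArg Prod.fst hcontra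
          have h2 : p.1 = n := congrArg Prod.snd hcontra
          exact Prod.ext h2 h1
        · simp only []
          omega
      · intro p _; rfl
    rw [hzero, add_zero]
  · rw [if_neg hm]
    apply Finset.sum_involution (fun p _ => (p.2, p.1))
    · intro p _
      rw [mul_comm]
      exact CharTwo.add_self_eq_zero _
    · intro p hp _
      rw [Finset.HasAntidiagonal.mem_antidiagonal] at hp
      intro hcontra
      have h1 : p.2 = p.1 := congrArg Prod.fst hcontra
      apply hm
      omega
    · intro p hp
      rw [Finset.HasAntidiagonal.mem_antidiagonal] at hp ⊢
      omega
    · intro p _; rfl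


lemma coeff_sq_even (A : R) (n : ℕ) :
    PowerSeries.coeff (R := ZMod 2) (2*n) (A^2) = PowerSeries.coeff (R := ZMod 2) n A := by
  rw [coeff_sq]; simp [Nat.mul_div_cancel_left]

lemma coeff_sq_odd (A : R) (n : ℕ) :
    PowerSeries.coeff (R := ZMod 2) (2*n+1) (A^2) = 0 := by
  rw [coeff_sq]
  have h : ¬ (2 ∣ 2*n+1) := by omega
  simp [h]

/-- dissection extraction: odd part -/
lemma dis_odd {F A Bb : R} (h : F = A^2 + X*Bb^2) (n : ℕ) :
    PowerSeries.coeff (R := ZMod 2) (2*n+1) F = PowerSeries.coeff (R := ZMod 2) n Bb := by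
  subst h
  rw [map_add, coeff_sq_odd, PowerSeries.coeff_succ_X_mul, coeff_sq_even, zero_add]

lemma coeff_even_X_sq (C : R) (n : ℕ) :
    PowerSeries.coeff (R := ZMod 2) (2*n) (X*C^2) = 0 := by
  cases n with
  | zero => simpa using PowerSeries.coeff_zero_X_mul (C^2)
  | succ r =>
      have : 2*(r+1) = (2*r+1)+1 := by ring
      rw [this, PowerSeries.coeff_succ_X_mul, coeff_sq_odd]


open scoped Classical

lemma if_mul_if (P Q : Prop) [Decidable P] [Decidable Q] :
    (if P then (1:ZMod 2) else 0) * (if Q then 1 else 0) = if P ∧ Q then 1 else 0 := by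
  split_ifs <;> simp_all

/-- expand a unique-witness indicator into a sum over a box -/
lemma ind_eq_sum {ι : Type*} [DecidableEq ι] (e : ι → ℤ) (box : Finset ι)
    (inj : ∀ c d, e c = e d → c = d) (i : ℕ)
    (hbox : ∀ c, e c = (i:ℤ) → c ∈ box) :
    (if ∃ c, (i:ℤ) = e c then (1:ZMod 2) else 0) =
      ∑ c ∈ box, if (i:ℤ) = e c then 1 else 0 := by
  by_cases h : ∃ c, (i:ℤ) = e c
  · obtain ⟨c₀, hc₀⟩ := h
    rw [if_pos ⟨c₀, hc₀⟩, Finset.sum_eq_single c₀]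
    · rw [if_pos hc₀]
    · intro b _ hb
      rw [if_neg]
      intro hcon
      exact hb (inj b c₀ (by omega))
    · intro hc; exact absurd (hbox c₀ hc₀.symm) hc
  · rw [if_neg h]
    symm; apply Finset.sum_eq_zero
    intro c _; rw [if_neg]; intro hcon; exact h ⟨c, hcon⟩

lemma antidiag_collapse (N : ℕ) (a b : ℤ) (ha : 0 ≤ a) (hb : 0 ≤ b) :
    (∑ p ∈ Finset.HasAntidiagonal.antidiagonal N,
      (if (p.1:ℤ) = a then (1:ZMod 2) else 0) * (if (p.2:ℤ) = b then 1 else 0)) =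
    if a + b = (N:ℤ) then 1 else 0 := by
  have hterm : ∀ p ∈ Finset.HasAntidiagonal.antidiagonal N,
      (if (p.1:ℤ) = a then (1:ZMod 2) else 0) * (if (p.2:ℤ) = b then 1 else 0) =
      if p = (a.toNat, b.toNat) then 1 else 0 := by
    intro p _
    rw [if_mul_if]
    apply if_congr _ rfl rfl
    constructor
    · rintro ⟨h1, h2⟩
      have : p.1 = a.toNat := by omega
      have h2' : p.2 = b.toNat := by omega
      exact Prod.ext this h2'
    · rintro rfl
      constructor <;> simp <;> omega
  rw [Finset.sum_congr rfl hterm, Finset.sum_ite_eq' (Finset.HasAntidiagonal.antidiagonal N)]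
  simp only [Finset.HasAntidiagonal.mem_antidiagonal]
  apply if_congr _ rfl rfl
  omega

/-- pair counting lemma -/
lemma coeff_mul_count {ι κ : Type*} [DecidableEq ι] [DecidableEq κ]
    (φ ψ : R) (e₁ : ι → ℤ) (e₂ : κ → ℤ) (box₁ : Finset ι) (box₂ : Finset κ) (N : ℕ)
    (h₁ : ∀ i : ℕ, PowerSeries.coeff (R := ZMod 2) i φ = if ∃ c, (i:ℤ) = e₁ c then 1 else 0)
    (h₂ : ∀ i : ℕ, PowerSeries.coeff (R := ZMod 2) i ψ = if ∃ c, (i:ℤ) = e₂ c then 1 else 0)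
    (inj₁ : ∀ c d, e₁ c = e₁ d → c = d) (inj₂ : ∀ c d, e₂ c = e₂ d → c = d)
    (nn₁ : ∀ c, 0 ≤ e₁ c) (nn₂ : ∀ c, 0 ≤ e₂ c)
    (hbox₁ : ∀ c, e₁ c ≤ (N:ℤ) → c ∈ box₁) (hbox₂ : ∀ c, e₂ c ≤ (N:ℤ) → c ∈ box₂) :
    PowerSeries.coeff (R := ZMod 2) N (φ * ψ) =
      ∑ q ∈ box₁ ×ˢ box₂, if e₁ q.1 + e₂ q.2 = (N:ℤ) then 1 else 0 := by
  classical
  rw [PowerSeries.coeff_mul]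
  have hstep : ∀ p ∈ Finset.HasAntidiagonal.antidiagonal N,
      PowerSeries.coeff (R := ZMod 2) p.1 φ * PowerSeries.coeff (R := ZMod 2) p.2 ψ =
      ∑ q ∈ box₁ ×ˢ box₂,
        (if (p.1:ℤ) = e₁ q.1 then (1:ZMod 2) else 0) * (if (p.2:ℤ) = e₂ q.2 then 1 else 0) := by
    intro p hp
    rw [Finset.HasAntidiagonal.mem_antidiagonal] at hp
    rw [h₁, h₂]
    rw [ind_eq_sum e₁ box₁ inj₁ p.1 (fun c hc => hbox₁ c (by omega)),
        ind_eq_sum e₂ box₂ inj₂ p.2 (fun c hc => hbox₂ c (by omega))]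
    rw [Finset.sum_mul_sum]
    rw [Finset.sum_product]
  rw [Finset.sum_congr rfl hstep, Finset.sum_comm]
  apply Finset.sum_congr rfl
  intro q _
  exact antidiag_collapse N (e₁ q.1) (e₂ q.2) (nn₁ q.1) (nn₂ q.2)

/-- triple counting lemma -/
lemma coeff_mul3_count {ι : Type*} [DecidableEq ι]
    (φ ψ χ : R) (e₁ e₂ e₃ : ι → ℤ) (box₁ box₂ box₃ : Finset ι) (N : ℕ)
    (h₁ : ∀ i : ℕ, PowerSeries.coeff (R := ZMod 2) i φ = if ∃ c, (i:ℤ) = e₁ c then 1 else 0)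
    (h₂ : ∀ i : ℕ, PowerSeries.coeff (R := ZMod 2) i ψ = if ∃ c, (i:ℤ) = e₂ c then 1 else 0)
    (h₃ : ∀ i : ℕ, PowerSeries.coeff (R := ZMod 2) i χ = if ∃ c, (i:ℤ) = e₃ c then 1 else 0)
    (inj₁ : ∀ c d, e₁ c = e₁ d → c = d) (inj₂ : ∀ c d, e₂ c = e₂ d → c = d)
    (inj₃ : ∀ c d, e₃ c = e₃ d → c = d)
    (nn₁ : ∀ c, 0 ≤ e₁ c) (nn₂ : ∀ c, 0 ≤ e₂ c) (nn₃ : ∀ c, 0 ≤ e₃ c)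
    (hbox₁ : ∀ c, e₁ c ≤ (N:ℤ) → c ∈ box₁) (hbox₂ : ∀ c, e₂ c ≤ (N:ℤ) → c ∈ box₂)
    (hbox₃ : ∀ c, e₃ c ≤ (N:ℤ) → c ∈ box₃) :
    PowerSeries.coeff (R := ZMod 2) N (φ * ψ * χ) =
      ∑ q ∈ box₁ ×ˢ (box₂ ×ˢ box₃),
        if e₁ q.1 + e₂ q.2.1 + e₃ q.2.2 = (N:ℤ) then 1 else 0 := by
  rw [mul_assoc, PowerSeries.coeff_mul]
  have hinner : ∀ j : ℕ, j ≤ N → PowerSeries.coeff (R := ZMod 2) j (ψ * χ) =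
      ∑ r ∈ box₂ ×ˢ box₃, if (j:ℤ) = e₂ r.1 + e₃ r.2 then (1:ZMod 2) else 0 := by
    intro j hj
    rw [PowerSeries.coeff_mul]
    have hstep : ∀ q ∈ Finset.HasAntidiagonal.antidiagonal j,
        PowerSeries.coeff (R := ZMod 2) q.1 ψ * PowerSeries.coeff (R := ZMod 2) q.2 χ =
        ∑ r ∈ box₂ ×ˢ box₃,
          (if (q.1:ℤ) = e₂ r.1 then (1:ZMod 2) else 0) * (if (q.2:ℤ) = e₃ r.2 then 1 else 0) := by
      intro q hq
      rw [Finset.HasAntidiagonal.mem_antidiagonal] at hq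
      rw [h₂, h₃,
        ind_eq_sum e₂ box₂ inj₂ q.1 (fun c hc => hbox₂ c (by omega)),
        ind_eq_sum e₃ box₃ inj₃ q.2 (fun c hc => hbox₃ c (by omega)),
        Finset.sum_mul_sum, Finset.sum_product]
    rw [Finset.sum_congr rfl hstep, Finset.sum_comm]
    apply Finset.sum_congr rfl
    intro r _
    rw [antidiag_collapse j (e₂ r.1) (e₃ r.2) (nn₂ r.1) (nn₃ r.2)]
    apply if_congr _ rfl rfl
    omega
  have hstep2 : ∀ p ∈ Finset.HasAntidiagonal.antidiagonal N,
      PowerSeries.coeff (R := ZMod 2) p.1 φ * PowerSeries.coeff (R := ZMod 2) p.2 (ψ * χ) =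
      ∑ q ∈ box₁ ×ˢ (box₂ ×ˢ box₃),
        (if (p.1:ℤ) = e₁ q.1 then (1:ZMod 2) else 0) *
          (if (p.2:ℤ) = e₂ q.2.1 + e₃ q.2.2 then 1 else 0) := by
    intro p hp
    rw [Finset.HasAntidiagonal.mem_antidiagonal] at hp
    rw [h₁, ind_eq_sum e₁ box₁ inj₁ p.1 (fun c hc => hbox₁ c (by omega)),
      hinner p.2 (by omega), Finset.sum_mul_sum, Finset.sum_product]
  rw [Finset.sum_congr rfl hstep2, Finset.sum_comm]
  apply Finset.sum_congr rfl
  intro q _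
  rw [antidiag_collapse N (e₁ q.1) (e₂ q.2.1 + e₃ q.2.2) (nn₁ q.1)
    (by have := nn₂ q.2.1; have := nn₃ q.2.2; omega)]
  apply if_congr _ rfl rfl
  omega

-- coefficient lemmas
lemma cg (i : ℕ) : PowerSeries.coeff (R := ZMod 2) i g =
    if ∃ a : ℕ, (i:ℤ) = (a:ℤ)^2 then 1 else 0 := by
  rw [g, PowerSeries.coeff_mk]
  apply if_congr _ rfl rfl
  constructor
  · rintro ⟨r, rfl⟩
    exact ⟨r, by push_cast; ring⟩
  · rintro ⟨a, ha⟩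
    refine ⟨a, ?_⟩
    have : (i:ℤ) = ((a*a : ℕ) : ℤ) := by push_cast; linarith [ha]
    exact_mod_cast this

lemma cT (i : ℕ) : PowerSeries.coeff (R := ZMod 2) i T =
    if ∃ c : ℤ, (i:ℤ) = 2*c^2 + c then 1 else 0 := by
  rw [T, PowerSeries.coeff_mk]

lemma cU (i : ℕ) : PowerSeries.coeff (R := ZMod 2) i U =
    if ∃ c : ℤ, (i:ℤ) = 4*c^2 + c then 1 else 0 := by
  rw [U, PowerSeries.coeff_mk]

lemma cV (i : ℕ) : PowerSeries.coeff (R := ZMod 2) i V =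
    if ∃ c : ℤ, (i:ℤ) = 4*c^2 + 3*c then 1 else 0 := by
  rw [V, PowerSeries.coeff_mk]

lemma cg2 (i : ℕ) : PowerSeries.coeff (R := ZMod 2) i (g^2) =
    if ∃ a : ℕ, (i:ℤ) = 2*(a:ℤ)^2 then 1 else 0 := by
  rw [coeff_sq, cg]
  by_cases h : 2 ∣ i
  · obtain ⟨j, rfl⟩ := h
    rw [if_pos ⟨j, rfl⟩, Nat.mul_div_cancel_left _ (by norm_num : 0 < 2)]
    apply if_congr _ rfl rfl
    constructor
    · rintro ⟨a, ha⟩; exact ⟨a, by push_cast at ha ⊢; linarith⟩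
    · rintro ⟨a, ha⟩; exact ⟨a, by push_cast at ha ⊢; linarith⟩
  · rw [if_neg h, if_neg]
    rintro ⟨a, ha⟩
    apply h
    have : (2:ℤ) ∣ (i:ℤ) := ⟨(a:ℤ)^2, ha⟩
    exact_mod_cast this

lemma cg4 (i : ℕ) : PowerSeries.coeff (R := ZMod 2) i (g^4) =
    if ∃ a : ℕ, (i:ℤ) = 4*(a:ℤ)^2 then 1 else 0 := by
  have h4 : g^4 = (g^2)^2 := by ring
  rw [h4, coeff_sq]
  by_cases h : 2 ∣ i
  · obtain ⟨j, rfl⟩ := h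
    rw [if_pos ⟨j, rfl⟩, Nat.mul_div_cancel_left _ (by norm_num : 0 < 2), cg2]
    apply if_congr _ rfl rfl
    constructor
    · rintro ⟨a, ha⟩; exact ⟨a, by push_cast at ha ⊢; linarith⟩
    · rintro ⟨a, ha⟩; exact ⟨a, by push_cast at ha ⊢; linarith⟩
  · rw [if_neg h, if_neg]
    rintro ⟨a, ha⟩
    apply h
    have : (2:ℤ) ∣ (i:ℤ) := ⟨2*(a:ℤ)^2, by linarith⟩
    exact_mod_cast this

lemma cU2 (i : ℕ) : PowerSeries.coeff (R := ZMod 2) i (U^2) =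
    if ∃ c : ℤ, (i:ℤ) = 8*c^2 + 2*c then 1 else 0 := by
  rw [coeff_sq]
  by_cases h : 2 ∣ i
  · obtain ⟨j, rfl⟩ := h
    rw [if_pos ⟨j, rfl⟩, Nat.mul_div_cancel_left _ (by norm_num : 0 < 2), cU]
    apply if_congr _ rfl rfl
    constructor
    · rintro ⟨c, hc⟩; exact ⟨c, by push_cast at hc ⊢; linarith⟩
    · rintro ⟨c, hc⟩; exact ⟨c, by push_cast at hc ⊢; linarith⟩
  · rw [if_neg h, if_neg]
    rintro ⟨c, hc⟩
    apply h
    have : (2:ℤ) ∣ (i:ℤ) := ⟨4*c^2 + c, by linarith⟩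
    exact_mod_cast this

lemma cT4 (i : ℕ) : PowerSeries.coeff (R := ZMod 2) i (T^4) =
    if ∃ c : ℤ, (i:ℤ) = 8*c^2 + 4*c then 1 else 0 := by
  have h4 : T^4 = (T^2)^2 := by ring
  rw [h4, coeff_sq]
  by_cases h : 2 ∣ i
  · obtain ⟨j, rfl⟩ := h
    rw [if_pos ⟨j, rfl⟩, Nat.mul_div_cancel_left _ (by norm_num : 0 < 2), coeff_sq]
    by_cases h2 : 2 ∣ j
    · obtain ⟨k, rfl⟩ := h2
      rw [if_pos ⟨k, rfl⟩, Nat.mul_div_cancel_left _ (by norm_num : 0 < 2), cT]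
      apply if_congr _ rfl rfl
      constructor
      · rintro ⟨c, hc⟩; exact ⟨c, by push_cast at hc ⊢; linarith⟩
      · rintro ⟨c, hc⟩; exact ⟨c, by push_cast at hc ⊢; linarith⟩
    · rw [if_neg h2, if_neg]
      rintro ⟨c, hc⟩
      apply h2
      have : (2:ℤ) ∣ (j:ℤ) := ⟨2*c^2 + c, by push_cast at hc ⊢; linarith⟩
      exact_mod_cast this
  · rw [if_neg h, if_neg]
    rintro ⟨c, hc⟩
    apply h
    have : (2:ℤ) ∣ (i:ℤ) := ⟨4*c^2 + 2*c, by linarith⟩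
    exact_mod_cast this

lemma cXV2 (i : ℕ) : PowerSeries.coeff (R := ZMod 2) i (X*V^2) =
    if ∃ c : ℤ, (i:ℤ) = 8*c^2 + 6*c + 1 then 1 else 0 := by
  cases i with
  | zero =>
      rw [PowerSeries.coeff_zero_X_mul, if_neg]
      rintro ⟨c, hc⟩
      have h1 : (0:ℤ) = 8*c^2+6*c+1 := by exact_mod_cast hc
      have h2 : (2:ℤ) ∣ 8*c^2+6*c := ⟨4*c^2+3*c, by ring⟩
      omega
  | succ j =>
      rw [PowerSeries.coeff_succ_X_mul, coeff_sq]
      by_cases h : 2 ∣ j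
      · obtain ⟨k, rfl⟩ := h
        rw [if_pos ⟨k, rfl⟩, Nat.mul_div_cancel_left _ (by norm_num : 0 < 2), cV]
        apply if_congr _ rfl rfl
        constructor
        · rintro ⟨c, hc⟩; exact ⟨c, by push_cast at hc ⊢; linarith⟩
        · rintro ⟨c, hc⟩; exact ⟨c, by push_cast at hc ⊢; linarith⟩
      · rw [if_neg h, if_neg]
        rintro ⟨c, hc⟩
        apply h
        have : (2:ℤ) ∣ (j:ℤ) := ⟨4*c^2+3*c, by push_cast at hc ⊢; linarith⟩
        exact_mod_cast this

lemma cXT8 (i : ℕ) : PowerSeries.coeff (R := ZMod 2) i (X*T^8) =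
    if ∃ c : ℤ, (i:ℤ) = 16*c^2 + 8*c + 1 then 1 else 0 := by
  have h8 : T^8 = (T^4)^2 := by ring
  cases i with
  | zero =>
      rw [PowerSeries.coeff_zero_X_mul, if_neg]
      rintro ⟨c, hc⟩
      have h1 : (0:ℤ) = 16*c^2+8*c+1 := by exact_mod_cast hc
      have h2 : (2:ℤ) ∣ 16*c^2+8*c := ⟨8*c^2+4*c, by ring⟩
      omega
  | succ j =>
      rw [PowerSeries.coeff_succ_X_mul, h8, coeff_sq]
      by_cases h : 2 ∣ j
      · obtain ⟨k, rfl⟩ := h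
        rw [if_pos ⟨k, rfl⟩, Nat.mul_div_cancel_left _ (by norm_num : 0 < 2), cT4]
        apply if_congr _ rfl rfl
        constructor
        · rintro ⟨c, hc⟩; exact ⟨c, by push_cast at hc ⊢; linarith⟩
        · rintro ⟨c, hc⟩; exact ⟨c, by push_cast at hc ⊢; linarith⟩
      · rw [if_neg h, if_neg]
        rintro ⟨c, hc⟩
        apply h
        have : (2:ℤ) ∣ (j:ℤ) := ⟨8*c^2+4*c, by push_cast at hc ⊢; linarith⟩
        exact_mod_cast this

lemma rel2 : g = g^4 + X*T^8 := by
  ext i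
  rw [map_add, cg, cg4, cXT8]
  by_cases h : ∃ a : ℕ, (i:ℤ) = (a:ℤ)^2
  · rw [if_pos h]
    obtain ⟨a, ha⟩ := h
    rcases Nat.even_or_odd a with he | ho
    · obtain ⟨k, hk⟩ := he
      have h1 : ∃ b : ℕ, (i:ℤ) = 4*(b:ℤ)^2 := ⟨k, by subst hk; push_cast at ha ⊢; linarith⟩
      rw [if_pos h1, if_neg]
      · norm_num
      · rintro ⟨c, hc⟩
        obtain ⟨b, hb⟩ := h1
        have h2 : 4*(b:ℤ)^2 = 16*c^2+8*c+1 := by linarith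
        have e1 : (2:ℤ) ∣ 4*(b:ℤ)^2 := ⟨2*(b:ℤ)^2, by ring⟩
        have e2 : (2:ℤ) ∣ 16*c^2+8*c := ⟨8*c^2+4*c, by ring⟩
        omega
    · obtain ⟨k, hk⟩ := ho
      have h2 : ∃ c : ℤ, (i:ℤ) = 16*c^2+8*c+1 := by
        rcases Nat.even_or_odd k with hke | hko
        · obtain ⟨t, ht⟩ := hke
          exact ⟨t, by subst hk ht; push_cast at ha ⊢; linarith⟩
        · obtain ⟨t, ht⟩ := hko
          refine ⟨-(t+1), ?_⟩
          subst hk ht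
          push_cast at ha ⊢
          linarith
      rw [if_pos h2, if_neg]
      · norm_num
      · rintro ⟨b, hb⟩
        obtain ⟨c, hc⟩ := h2
        have e2 : (2:ℤ) ∣ 16*c^2+8*c := ⟨8*c^2+4*c, by ring⟩
        have e1 : (2:ℤ) ∣ 4*(b:ℤ)^2 := ⟨2*(b:ℤ)^2, by ring⟩
        omega
  · rw [if_neg h, if_neg, if_neg]
    · norm_num
    · rintro ⟨c, hc⟩
      apply h
      refine ⟨(4*c+1).natAbs, ?_⟩
      rw [hc]
      have : ((4*c+1).natAbs : ℤ)^2 = (4*c+1)^2 := by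
        rw [Int.natAbs_pow_two]
      rw [this]; ring
    · rintro ⟨b, hb⟩
      exact h ⟨2*b, by push_cast at hb ⊢; linarith⟩

lemma rel3 : T = U^2 + X*V^2 := by
  ext i
  rw [map_add, cT, cU2, cXV2]
  by_cases h : ∃ c : ℤ, (i:ℤ) = 2*c^2 + c
  · rw [if_pos h]
    obtain ⟨c, hc⟩ := h
    rcases Int.even_or_odd c with he | ho
    · obtain ⟨j, hj⟩ := he
      have h1 : ∃ d : ℤ, (i:ℤ) = 8*d^2+2*d := ⟨j, by subst hj; linarith [hc]⟩
      rw [if_pos h1, if_neg]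
      · norm_num
      · rintro ⟨d, hd⟩
        obtain ⟨d', hd'⟩ := h1
        have e1 : (2:ℤ) ∣ 8*d'^2+2*d' := ⟨4*d'^2+d', by ring⟩
        have e2 : (2:ℤ) ∣ 8*d^2+6*d := ⟨4*d^2+3*d, by ring⟩
        omega
    · obtain ⟨j, hj⟩ := ho
      have h2 : ∃ d : ℤ, (i:ℤ) = 8*d^2+6*d+1 := ⟨-(j+1), by subst hj; linarith [hc]⟩
      rw [if_pos h2, if_neg]
      · norm_num
      · rintro ⟨d, hd⟩
        obtain ⟨d', hd'⟩ := h2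
        have e1 : (2:ℤ) ∣ 8*d^2+2*d := ⟨4*d^2+d, by ring⟩
        have e2 : (2:ℤ) ∣ 8*d'^2+6*d' := ⟨4*d'^2+3*d', by ring⟩
        omega
  · rw [if_neg h, if_neg, if_neg]
    · norm_num
    · rintro ⟨d, hd⟩
      exact h ⟨-(2*d+1), by rw [hd]; ring⟩
    · rintro ⟨d, hd⟩
      exact h ⟨2*d, by rw [hd]; ring⟩

lemma succ_mul_nn (x : ℤ) : 0 ≤ x*(x+1) := by
  rcases le_or_gt 0 x with h | h
  · positivity
  · nlinarith

lemma nnUe (c : ℤ) : 0 ≤ 4*c^2+c := by nlinarith [succ_mul_nn (2*c), sq_nonneg c]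
lemma nnVe (c : ℤ) : 0 ≤ 4*c^2+3*c := by nlinarith [succ_mul_nn (2*c), sq_nonneg c, succ_mul_nn c]
lemma nnTe (c : ℤ) : 0 ≤ 2*c^2+c := by nlinarith [succ_mul_nn c, sq_nonneg c, succ_mul_nn (2*c)]
lemma nnT4e (c : ℤ) : 0 ≤ 8*c^2+4*c := by nlinarith [succ_mul_nn c, sq_nonneg c]

lemma injUe (c d : ℤ) (h : 4*c^2+c = 4*d^2+d) : c = d := by
  have h2 : (c-d)*(4*(c+d)+1) = 0 := by linear_combination h
  rcases mul_eq_zero.mp h2 with h3 | h3 <;> omega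

lemma injVe (c d : ℤ) (h : 4*c^2+3*c = 4*d^2+3*d) : c = d := by
  have h2 : (c-d)*(4*(c+d)+3) = 0 := by linear_combination h
  rcases mul_eq_zero.mp h2 with h3 | h3 <;> omega

lemma injTe (c d : ℤ) (h : 2*c^2+c = 2*d^2+d) : c = d := by
  have h2 : (c-d)*(2*(c+d)+1) = 0 := by linear_combination h
  rcases mul_eq_zero.mp h2 with h3 | h3 <;> omega

lemma injT4e (c d : ℤ) (h : 8*c^2+4*c = 8*d^2+4*d) : c = d := by
  have h2 : (c-d)*(8*(c+d)+4) = 0 := by linear_combination h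
  rcases mul_eq_zero.mp h2 with h3 | h3 <;> omega

noncomputable def PhiM : ℤ×ℤ → ℤ×ℤ := fun q =>
  (q.2 - q.1, if Even (q.1+q.2) then (q.1+q.2)/2 else (-(q.1+q.2)-1)/2)

noncomputable def PsiM : ℤ×ℤ → ℤ×ℤ := fun q =>
  (((if Even q.1 then 2*q.2 else -2*q.2-1) + -q.1)/2,
   ((if Even q.1 then 2*q.2 else -2*q.2-1) - -q.1)/2)

lemma PhiM_even (j m k : ℤ) (hk : j+m = k+k) : PhiM (j,m) = (m-j, k) := by
  rw [PhiM]
  dsimp only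
  rw [if_pos ⟨k, hk⟩]
  exact Prod.ext rfl (by omega)

lemma PhiM_odd (j m k : ℤ) (hk : j+m = 2*k+1) : PhiM (j,m) = (m-j, -(k+1)) := by
  rw [PhiM]
  dsimp only
  rw [if_neg (by rw [Int.even_iff]; omega)]
  exact Prod.ext rfl (by omega)

lemma PsiM_even (c d e : ℤ) (hc : c = e+e) : PsiM (c,d) = (d-e, d+e) := by
  rw [PsiM]
  dsimp only
  rw [if_pos ⟨e, hc⟩]
  exact Prod.ext (by omega) (by omega)

lemma PsiM_odd (c d e : ℤ) (hc : c = 2*e+1) : PsiM (c,d) = (-d-e-1, e-d) := by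
  rw [PsiM]
  dsimp only
  rw [if_neg (by rw [Int.even_iff]; omega)]
  exact Prod.ext (by omega) (by omega)

lemma rel4 : U * V = T * T^4 := by
  ext N
  set K : Finset ℤ := Finset.Icc (-(2*(N:ℤ)+2)) (2*(N:ℤ)+2) with hK
  have memK : ∀ c : ℤ, -(2*(N:ℤ)+2) ≤ c → c ≤ 2*(N:ℤ)+2 → c ∈ K := by
    intro c h1 h2; rw [hK, Finset.mem_Icc]; exact ⟨h1, h2⟩
  have hL : PowerSeries.coeff (R := ZMod 2) N (U * V) =
      ∑ q ∈ K ×ˢ K, if (4*q.1^2+q.1) + (4*q.2^2+3*q.2) = (N:ℤ) then 1 else 0 := by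
    apply coeff_mul_count U V (fun c => 4*c^2+c) (fun c => 4*c^2+3*c) K K N cU cV
      injUe injVe nnUe nnVe
    · intro c hc
      apply memK <;> nlinarith [succ_mul_nn (2*c), sq_nonneg c, nnUe c]
    · intro c hc
      apply memK <;> nlinarith [succ_mul_nn (2*c), succ_mul_nn c, sq_nonneg c, nnVe c]
  have hR : PowerSeries.coeff (R := ZMod 2) N (T * T^4) =
      ∑ q ∈ K ×ˢ K, if (2*q.1^2+q.1) + (8*q.2^2+4*q.2) = (N:ℤ) then 1 else 0 := by
    apply coeff_mul_count T (T^4) (fun c => 2*c^2+c) (fun c => 8*c^2+4*c) K K N cT cT4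
      injTe injT4e nnTe nnT4e
    · intro c hc
      apply memK <;> nlinarith [succ_mul_nn c, sq_nonneg c, succ_mul_nn (2*c), nnTe c]
    · intro c hc
      apply memK <;> nlinarith [succ_mul_nn c, sq_nonneg c, nnT4e c]
  rw [hL, hR, Finset.sum_boole, Finset.sum_boole]
  congr 1
  apply Finset.card_nbij' PhiM PsiM
  -- forward membership
  · rintro ⟨j, m⟩ hq
    rw [Finset.mem_coe, Finset.mem_filter, Finset.mem_product, hK, Finset.mem_Icc, Finset.mem_Icc] at hq
    obtain ⟨⟨hj, hm⟩, hEq⟩ := hq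
    dsimp only at hEq
    have hbj : 4*j^2+j ≤ (N:ℤ) := by nlinarith [nnVe m]
    have hbm : 4*m^2+3*m ≤ (N:ℤ) := by nlinarith [nnUe j]
    have hjb : -(N:ℤ) ≤ j ∧ j ≤ (N:ℤ) := by
      constructor <;> nlinarith [succ_mul_nn (2*j), sq_nonneg j, nnUe j]
    have hmb : -(N:ℤ) ≤ m ∧ m ≤ (N:ℤ) := by
      constructor <;> nlinarith [succ_mul_nn (2*m), succ_mul_nn m, sq_nonneg m, nnVe m]
    rw [Finset.mem_coe, Finset.mem_filter, Finset.mem_product, hK, Finset.mem_Icc, Finset.mem_Icc]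
    rcases Int.even_or_odd (j+m) with ⟨k, hk⟩ | ⟨k, hk⟩
    · rw [PhiM_even j m k hk]
      refine ⟨⟨⟨by omega, by omega⟩, ⟨by omega, by omega⟩⟩, ?_⟩
      dsimp only
      linear_combination hEq + (-2*(j+m+2*k)-2) * hk
    · rw [PhiM_odd j m k hk]
      refine ⟨⟨⟨by omega, by omega⟩, ⟨by omega, by omega⟩⟩, ?_⟩
      dsimp only
      linear_combination hEq + (-2*(j+m)-4*k-4) * hk
  -- backward membership
  · rintro ⟨c, d⟩ hq
    rw [Finset.mem_coe, Finset.mem_filter, Finset.mem_product, hK, Finset.mem_Icc, Finset.mem_Icc] at hq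
    obtain ⟨⟨hc, hd⟩, hEq⟩ := hq
    dsimp only at hEq
    have hbc : 2*c^2+c ≤ (N:ℤ) := by nlinarith [nnT4e d]
    have hbd : 8*d^2+4*d ≤ (N:ℤ) := by nlinarith [nnTe c]
    have hcb : -(N:ℤ) ≤ c ∧ c ≤ (N:ℤ) := by
      constructor <;> nlinarith [succ_mul_nn c, sq_nonneg c, succ_mul_nn (2*c), nnTe c]
    have hdb : -(N:ℤ) ≤ d ∧ d ≤ (N:ℤ) := by
      constructor <;> nlinarith [succ_mul_nn d, sq_nonneg d, nnT4e d]
    rw [Finset.mem_coe, Finset.mem_filter, Finset.mem_product, hK, Finset.mem_Icc, Finset.mem_Icc]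
    rcases Int.even_or_odd c with ⟨e, hcE⟩ | ⟨e, hcE⟩
    · rw [PsiM_even c d e hcE]
      refine ⟨⟨⟨by omega, by omega⟩, ⟨by omega, by omega⟩⟩, ?_⟩
      dsimp only
      linear_combination hEq - (2*c+4*e+1) * hcE
    · rw [PsiM_odd c d e hcE]
      refine ⟨⟨⟨by omega, by omega⟩, ⟨by omega, by omega⟩⟩, ?_⟩
      dsimp only
      linear_combination hEq - (2*c+4*e+3) * hcE
  -- left inverse
  · rintro ⟨j, m⟩ _
    rcases Int.even_or_odd (j+m) with ⟨k, hk⟩ | ⟨k, hk⟩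
    · rw [PhiM_even j m k hk, PsiM_even (m-j) k (k-j) (by omega)]
      exact Prod.ext (by omega) (by omega)
    · rw [PhiM_odd j m k hk, PsiM_odd (m-j) (-(k+1)) (k-j) (by omega)]
      exact Prod.ext (by omega) (by omega)
  -- right inverse
  · rintro ⟨c, d⟩ _
    rcases Int.even_or_odd c with ⟨e, hcE⟩ | ⟨e, hcE⟩
    · rw [PsiM_even c d e hcE, PhiM_even (d-e) (d+e) d (by omega)]
      exact Prod.ext (by omega) (by omega)
    · rw [PsiM_odd c d e hcE, PhiM_odd (-d-e-1) (e-d) (-d-1) (by omega)]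
      exact Prod.ext (by omega) (by omega)

lemma hr2 : g = g^4 + X*T^8 := rel2
lemma hr3 : T = U^2 + X*V^2 := rel3
lemma hr4 : U*V = T^5 := by rw [rel4]; ring

lemma hg0 : PowerSeries.constantCoeff (R := ZMod 2) g = 1 := by
  rw [← PowerSeries.coeff_zero_eq_constantCoeff, cg]
  rw [if_pos ⟨0, by norm_num⟩]

lemma hT0 : PowerSeries.constantCoeff (R := ZMod 2) T = 1 := by
  rw [← PowerSeries.coeff_zero_eq_constantCoeff, cT]
  rw [if_pos ⟨0, by norm_num⟩]

lemma gne : g ≠ 0 := by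
  intro h
  have := hg0
  rw [h, map_zero] at this
  exact one_ne_zero this.symm

lemma Tne : T ≠ 0 := by
  intro h
  have := hT0
  rw [h, map_zero] at this
  exact one_ne_zero this.symm

lemma hgf : g * g⁻¹ = 1 :=
  PowerSeries.mul_inv_cancel g (by rw [hg0]; exact one_ne_zero)

lemma hr1 : g⁻¹ = g^2 + X*T^8*g⁻¹^2 := by
  have hA1 : g * (g^2 + X*T^8*g⁻¹^2) = 1 := by
    linear_combination (-(g⁻¹^2*g)) * hr2 + (1 - g^3 + g⁻¹*g - g⁻¹*g^4) * hgf
  exact (mul_left_cancel₀ gne (hgf.trans hA1.symm))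

lemma hS : (g+g^2)*T = X*V^2 := by
  have E6a1 : ((g+g^2)*T)^2 + ((g+g^2)*T)*T = X*T^10 := by
    linear_combination (T^2) * hr2 + (g^2*T^2 + g^3*T^2 + g^4*T^2) * htwo
  have E6a2 : (X*V^2)^2 + (X*V^2)*T = X*T^10 := by
    linear_combination (-(U*V*X) - T^5*X) * hr4 + (-(V^2*X) - 2*T) * hr3 +
      (-(T*U^2) + T^2 - T^10*X) * htwo
  have hq : ((g+g^2)*T + X*V^2)*(((g+g^2)*T + X*V^2)+T) = 0 := by
    linear_combination E6a1 + E6a2 + (X*T^10 + ((g+g^2)*T)*(X*V^2)) * htwo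
  rcases mul_eq_zero.mp hq with h1 | h1
  · linear_combination h1 + (-(X*V^2)) * htwo
  · exfalso
    have h0 := congrArg (PowerSeries.constantCoeff (R := ZMod 2)) h1
    simp only [map_add, map_mul, PowerSeries.constantCoeff_X, zero_mul, map_pow, hT0, hg0,
      map_zero, mul_one] at h0
    revert h0
    decide

lemma hE6b : U*(g+g^2) + X*V*T^4 = 0 := by
  have h1 : (U*((g+g^2)*T))^2 = (X*V*T^5)^2 := by
    rw [hS]
    linear_combination (U*V^3*X^2 + T^5*V^2*X^2) * hr4
  have hA4 : ((U*(g+g^2) + X*V*T^4)*T)^2 = 0 := by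
    linear_combination h1 + (U*(g+g^2)*T*(X*V*T^5) + (X*V*T^5)^2) * htwo
  have h2 : (U*(g+g^2) + X*V*T^4)*T = 0 := by
    exact pow_eq_zero_iff (two_ne_zero) |>.mp hA4
  rcases mul_eq_zero.mp h2 with h3 | h3
  · exact h3
  · exact absurd h3 Tne

lemma hE7 : U*(1+g) + X*V*T^4*g⁻¹ = 0 := by
  linear_combination g⁻¹ * hE6b + (-U-U*g) * hgf

lemma S0 : g⁻¹ + g^7 = (g+g^5)^2 + X*(T^4*(g⁻¹+g^3))^2 := by
  linear_combination hr1 + (g^6 + 2*g⁻¹*g^3) * hr2 + (-(g^6) - g⁻¹*g^4 + g⁻¹*g^7) * htwo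

lemma S1 : T^4*(g⁻¹+g^3) = (T^2*(g+g^3))^2 + X*(T^6*(g⁻¹+g))^2 := by
  linear_combination T^4 * hr1 + (g^2*T^4 + 2*g⁻¹*g*T^4) * hr2 +
    (-(g^4*T^4) - g⁻¹*g^2*T^4 + g⁻¹*g^5*T^4) * htwo

lemma S2 : T^6*(g⁻¹+g) = (T^3*(g+g^2))^2 + X*(T^7*(g⁻¹+1))^2 := by
  linear_combination T^6 * hr1 + (T^6 + 2*g⁻¹*T^6) * hr2 +
    (-(g^3*T^6) - g⁻¹*g*T^6 + g⁻¹*g^4*T^6) * htwo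

lemma S3 : T^7*(g⁻¹+1) = X*(T^3*(U*(T^4*g⁻¹)+V*(1+g)))^2 := by
  have step1 : g⁻¹ + 1 = (1+g)^2 + X*(T^4*g⁻¹)^2 := by
    linear_combination hr1 + (-g) * htwo
  have step2 : T*((1+g)^2 + X*(T^4*g⁻¹)^2) =
      (U*(1+g)+X*V*(T^4*g⁻¹))^2 + X*(U*(T^4*g⁻¹)+V*(1+g))^2 := by
    linear_combination ((1+g)^2+X*(T^4*g⁻¹)^2) * hr3 +
      (-2*X*U*V*(1+g)*(T^4*g⁻¹)) * htwo
  have step3 : T*(g⁻¹+1) = (U*(1+g)+X*V*(T^4*g⁻¹))^2 + X*(U*(T^4*g⁻¹)+V*(1+g))^2 := by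
    linear_combination T * step1 + step2
  have step4 : T*(g⁻¹+1) = X*(U*(T^4*g⁻¹)+V*(1+g))^2 := by
    linear_combination step3 + (U*(1+g)+X*V*(T^4*g⁻¹)) * hE7
  linear_combination T^6 * step4

lemma chain (n : ℕ) (hn : n % 16 = 7) :
    PowerSeries.coeff (R := ZMod 2) n g⁻¹ = PowerSeries.coeff (R := ZMod 2) n (g^7) := by
  set k := n / 16 with hk
  have e0 : PowerSeries.coeff (R := ZMod 2) n (g⁻¹ + g^7) =
      PowerSeries.coeff (R := ZMod 2) (8*k+3) (T^4*(g⁻¹+g^3)) := by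
    have h : n = 2*(8*k+3)+1 := by omega
    rw [h]
    exact dis_odd S0 _
  have e1 : PowerSeries.coeff (R := ZMod 2) (8*k+3) (T^4*(g⁻¹+g^3)) =
      PowerSeries.coeff (R := ZMod 2) (4*k+1) (T^6*(g⁻¹+g)) := by
    have h : 8*k+3 = 2*(4*k+1)+1 := by ring
    rw [h]
    exact dis_odd S1 _
  have e2 : PowerSeries.coeff (R := ZMod 2) (4*k+1) (T^6*(g⁻¹+g)) =
      PowerSeries.coeff (R := ZMod 2) (2*k) (T^7*(g⁻¹+1)) := by
    have h : 4*k+1 = 2*(2*k)+1 := by ring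
    rw [h]
    exact dis_odd S2 _
  have e3 : PowerSeries.coeff (R := ZMod 2) (2*k) (T^7*(g⁻¹+1)) = 0 := by
    rw [S3]
    exact coeff_even_X_sq _ _
  have hsum : PowerSeries.coeff (R := ZMod 2) n g⁻¹ + PowerSeries.coeff (R := ZMod 2) n (g^7) = 0 := by
    rw [← map_add, e0, e1, e2, e3]
  have hz2 : ∀ a b : ZMod 2, a + b = 0 → a = b := by decide
  exact hz2 _ _ hsum

lemma injSq1 (c d : ℕ) (h : ((c:ℤ))^2 = ((d:ℤ))^2) : c = d := by
  have h2 : c^2 = d^2 := by exact_mod_cast h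
  exact Nat.pow_left_injective (by norm_num) h2

lemma injSq2 (c d : ℕ) (h : 2*((c:ℤ))^2 = 2*((d:ℤ))^2) : c = d :=
  injSq1 c d (by linarith)

lemma injSq4 (c d : ℕ) (h : 4*((c:ℤ))^2 = 4*((d:ℤ))^2) : c = d :=
  injSq1 c d (by linarith)

lemma nat_le_sq (a : ℕ) : (a:ℤ) ≤ (a:ℤ)^2 := by
  nlinarith [sq_nonneg ((a:ℤ)-1), Int.ofNat_nonneg a]

lemma coeff_g7_count (N : ℕ) :
    PowerSeries.coeff (R := ZMod 2) N (g^7) =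
      ((((Finset.range (N+1)) ×ˢ ((Finset.range (N+1)) ×ˢ (Finset.range (N+1)))).filter
        (fun q : ℕ × ℕ × ℕ =>
          ((q.1:ℤ))^2 + 2*((q.2.1:ℤ))^2 + 4*((q.2.2:ℤ))^2 = (N:ℤ))).card : ZMod 2) := by
  have h7 : g^7 = g * g^2 * g^4 := by ring
  rw [h7]
  rw [coeff_mul3_count g (g^2) (g^4) (fun a : ℕ => ((a:ℤ))^2) (fun a : ℕ => 2*((a:ℤ))^2)
    (fun a : ℕ => 4*((a:ℤ))^2) (Finset.range (N+1)) (Finset.range (N+1)) (Finset.range (N+1)) N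
    cg cg2 cg4 injSq1 injSq2 injSq4
    (fun c => by positivity) (fun c => by positivity) (fun c => by positivity)
    (fun c hc => by
      rw [Finset.mem_range]
      have hc' : ((c:ℤ))^2 ≤ (N:ℤ) := hc
      have h1 := nat_le_sq c
      have : (c:ℤ) ≤ (N:ℤ) := by linarith
      omega)
    (fun c hc => by
      rw [Finset.mem_range]
      have hc' : 2*((c:ℤ))^2 ≤ (N:ℤ) := hc
      have h1 := nat_le_sq c
      have h2 : 0 ≤ ((c:ℤ))^2 := by positivity
      have : (c:ℤ) ≤ (N:ℤ) := by linarith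
      omega)
    (fun c hc => by
      rw [Finset.mem_range]
      have hc' : 4*((c:ℤ))^2 ≤ (N:ℤ) := hc
      have h1 := nat_le_sq c
      have h2 : 0 ≤ ((c:ℤ))^2 := by positivity
      have : (c:ℤ) ≤ (N:ℤ) := by linarith
      omega)]
  rw [Finset.sum_boole]

lemma parity_cast (m : ℕ) : ((m : ZMod 2) = 1) ↔ Odd m := by
  rw [Nat.odd_iff]
  have hm : ((m % 2 : ℕ) : ZMod 2) = (m : ZMod 2) := ZMod.natCast_mod m 2
  have h2 : m % 2 = 0 ∨ m % 2 = 1 := by omega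
  rcases h2 with h | h
  · rw [← hm, h]
    simp only [Nat.cast_zero]
    constructor
    · intro hc; exact absurd hc.symm (by decide)
    · intro hc; omega
  · rw [← hm, h]
    simp

end Stmt12Aux

theorem stmt12 (n : ℕ) (hn : n % 16 = 7) :
    n ∈ B ↔
      Odd (Nat.card {t : ℕ × ℕ × ℕ // n = t.1 ^ 2 + 2 * t.2.1 ^ 2 + 4 * t.2.2 ^ 2}) := by
  have hmem : n ∈ B ↔ PowerSeries.coeff (R := ZMod 2) n g⁻¹ = 1 := Iff.rfl
  rw [hmem, Stmt12Aux.chain n hn, Stmt12Aux.coeff_g7_count n]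
  have hcard : Nat.card {t : ℕ × ℕ × ℕ // n = t.1 ^ 2 + 2 * t.2.1 ^ 2 + 4 * t.2.2 ^ 2} =
      (((Finset.range (n+1)) ×ˢ ((Finset.range (n+1)) ×ˢ (Finset.range (n+1)))).filter
        (fun q : ℕ × ℕ × ℕ =>
          ((q.1:ℤ))^2 + 2*((q.2.1:ℤ))^2 + 4*((q.2.2:ℤ))^2 = (n:ℤ))).card := by
    rw [← Nat.card_eq_finsetCard]
    apply Nat.card_congr
    apply Equiv.subtypeEquivRight
    intro t
    rw [Finset.mem_filter, Finset.mem_product, Finset.mem_product,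
      Finset.mem_range, Finset.mem_range, Finset.mem_range]
    constructor
    · intro ht
      have h1 : t.1^2 ≤ n := by linarith [ht.le, Nat.zero_le (2*t.2.1^2), Nat.zero_le (4*t.2.2^2)]
      have h2 : t.2.1^2 ≤ n := by nlinarith [ht.le]
      have h3 : t.2.2^2 ≤ n := by nlinarith [ht.le]
      refine ⟨⟨?_, ?_, ?_⟩, ?_⟩
      · exact Nat.lt_succ_of_le (le_trans (Nat.le_self_pow (by norm_num) _) h1)
      · exact Nat.lt_succ_of_le (le_trans (Nat.le_self_pow (by norm_num) _) h2)
      · exact Nat.lt_succ_of_le (le_trans (Nat.le_self_pow (by norm_num) _) h3)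
      · exact_mod_cast ht.symm
    · rintro ⟨-, hEq⟩
      exact_mod_cast hEq.symm
  rw [hcard]
  exact Stmt12Aux.parity_cast _
end
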